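/- Let γ : ℕ → ℂ with associated polynomials P_n(x) = Σ_{k=0}^n (γ_k/k!) D^k[x^n] for n ≥ 0. Then {P_n}_{n=0}^∞ is an orthogonal polynomial sequence if and only if γ_0 ≠ 0 and there exist constants a, b ∈ ℂ with a ≠ 0 such that γ_1 = −b·γ_0 and, for all n ≥ 2, γ_n = −b·γ_{n−1} − a(n−1)γ_{n−2}. -/

import Mathlib

open Polynomial Finset

set_option linter.unusedSectionVars false

noncomputable def Sg (γ : ℕ → ℂ) (n : ℕ) : Polynomial ℂ :=
  ∑ j ∈ Finset.range (n+1), C (γ (n - j) * (n.choose j : ℂ)) * X ^ j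

lemma Pform (γ : ℕ → ℂ) (n : ℕ) :
    (∑ k ∈ Finset.range (n + 1),
      C (γ k / (k.factorial : ℂ)) * derivative^[k] ((X : Polynomial ℂ) ^ n)) = Sg γ n := by
  rw [Sg, ← Finset.sum_range_reflect]
  refine Finset.sum_congr rfl fun j hj => ?_
  rw [Finset.mem_range, Nat.lt_succ_iff] at hj
  simp only [Nat.add_sub_cancel]
  rw [iterate_derivative_X_pow_eq_C_mul, Nat.sub_sub_self hj,
    Nat.descFactorial_eq_factorial_mul_choose]
  rw [← mul_assoc, ← C_mul, Nat.choose_symm hj]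
  congr 2
  push_cast
  rw [div_mul_eq_mul_div, mul_comm ((n-j).factorial:ℂ), ← mul_assoc, mul_div_assoc,
    div_self (by exact_mod_cast Nat.factorial_ne_zero (n-j)), mul_one]

lemma Sg_coeff (γ : ℕ → ℂ) (n j : ℕ) :
    (Sg γ n).coeff j = if j ≤ n then γ (n - j) * (n.choose j : ℂ) else 0 := by
  rw [Sg, finset_sum_coeff]
  simp only [coeff_C_mul, coeff_X_pow, mul_ite, mul_one, mul_zero]
  rw [Finset.sum_ite_eq (Finset.range (n+1)) j]
  simp [Nat.lt_succ_iff]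

lemma Sg_coeff_top (γ : ℕ → ℂ) (n : ℕ) : (Sg γ n).coeff n = γ 0 := by
  simp [Sg_coeff]

lemma Sg_coeff_zero (γ : ℕ → ℂ) (n : ℕ) : (Sg γ n).coeff 0 = γ n := by
  simp [Sg_coeff]

lemma Sg_degree_lt (γ : ℕ → ℂ) (n : ℕ) : (Sg γ n).degree < (n + 1 : ℕ) := by
  rw [degree_lt_iff_coeff_zero]
  intro m hm
  rw [Sg_coeff, if_neg (by exact_mod_cast Nat.not_le.mpr (by exact_mod_cast hm))]

lemma Sg_degree (γ : ℕ → ℂ) (hγ : γ 0 ≠ 0) (n : ℕ) : (Sg γ n).degree = n := by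
  refine le_antisymm ?_ (le_degree_of_ne_zero (by rw [Sg_coeff_top]; exact hγ))
  have := Sg_degree_lt γ n
  exact Order.lt_succ_iff.mp (by exact_mod_cast this)

lemma Sg_ne_zero (γ : ℕ → ℂ) (hγ : γ 0 ≠ 0) (n : ℕ) : Sg γ n ≠ 0 := fun h => by
  have := Sg_coeff_top γ n; rw [h] at this; simp at this; exact hγ this.symm

lemma Sg_derivative (γ : ℕ → ℂ) (n : ℕ) :
    derivative (Sg γ n) = (n : ℂ) • Sg γ (n - 1) := by
  cases n with
  | zero => simp [Sg]
  | succ m =>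
    rw [Sg, derivative_sum]
    simp only [derivative_C_mul, derivative_X_pow]
    rw [Finset.sum_range_succ']
    simp only [Nat.cast_zero, C_0, zero_mul, mul_zero, add_zero]
    rw [Nat.succ_sub_one, Sg, Finset.smul_sum]
    refine Finset.sum_congr rfl fun i hi => ?_
    rw [Nat.succ_sub_succ, Nat.add_sub_cancel, smul_eq_C_mul, ← mul_assoc, ← mul_assoc,
      ← C_mul, ← C_mul]
    congr 2
    have h := Nat.add_one_mul_choose_eq m i
    have h2 : (((m+1) * m.choose i : ℕ) : ℂ) = (((m+1).choose (i+1) * (i+1) : ℕ) : ℂ) := by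
      exact_mod_cast congrArg (Nat.cast : ℕ → ℂ) h
    push_cast at h2 ⊢
    linear_combination (-γ (m - i)) * h2

lemma zero_of_deriv (p : Polynomial ℂ) (h1 : derivative p = 0) (h2 : p.coeff 0 = 0) :
    p = 0 := by
  have hd : p.natDegree = 0 := natDegree_eq_zero_of_derivative_eq_zero h1
  rw [eq_C_of_natDegree_eq_zero hd, h2, C_0]

lemma Sg_rec (γ : ℕ → ℂ) (a b : ℂ) (hγ1 : γ 1 = -b * γ 0)
    (hrec : ∀ n : ℕ, 2 ≤ n → γ n = -b * γ (n - 1) - a * ((n : ℂ) - 1) * γ (n - 2)) :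
    ∀ n : ℕ, X * Sg γ n = Sg γ (n+1) + C b * Sg γ n + C (a * n) * Sg γ (n-1) := by
  intro n
  induction n with
  | zero =>
    simp only [Nat.cast_zero, mul_zero, C_0, zero_mul, add_zero, Nat.zero_sub]
    have h0 : Sg γ 0 = C (γ 0) := by simp [Sg]
    have h1 : Sg γ 1 = C (γ 1) + C (γ 0) * X := by
      rw [Sg]
      rw [Finset.sum_range_succ, Finset.sum_range_one]
      simp
    rw [h0, h1, hγ1]
    ring_nf
    rw [map_neg, map_mul]
    ring
  | succ n IH =>
    have key : Sg γ (n+1+1) + C b * Sg γ (n+1) + C (a * (n+1:ℕ)) * Sg γ (n+1-1)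
        - X * Sg γ (n+1) = 0 := by
      apply zero_of_deriv
      · simp only [derivative_sub, derivative_add, derivative_C_mul, derivative_mul,
          derivative_C, derivative_X, Sg_derivative, Nat.add_sub_cancel, one_mul,
          zero_mul, mul_zero, add_zero, zero_add, mul_one, smul_eq_C_mul]
        push_cast
        simp only [C_add, C_mul, C_1] at IH ⊢
        linear_combination (-(C (n:ℂ)) - 1) * IH
      · simp only [coeff_sub, coeff_add, coeff_C_mul, Sg_coeff_zero, mul_coeff_zero,
          coeff_X_zero, zero_mul, Nat.add_sub_cancel, sub_zero, coeff_C]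
        have h := hrec (n+2) (by omega)
        rw [show n+2-1 = n+1 by omega, show n+2-2 = n by omega] at h
        push_cast at h ⊢
        linear_combination h
    linear_combination -key

noncomputable def mu (γ : ℕ → ℂ) : ℕ → ℂ
  | 0 => 1
  | n + 1 => -(γ 0)⁻¹ * ∑ j ∈ (Finset.range (n+1)).attach,
      γ (n+1-j.1) * (((n+1).choose j.1 : ℕ) : ℂ) * mu γ j.1
  decreasing_by exact Finset.mem_range.mp j.2

noncomputable def Lfun (γ : ℕ → ℂ) : Polynomial ℂ →ₗ[ℂ] ℂ :=
  Polynomial.lsum (fun n => mu γ n • LinearMap.id)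

lemma Lfun_CXpow (γ : ℕ → ℂ) (c : ℂ) (j : ℕ) : Lfun γ (C c * X^j) = mu γ j * c := by
  rw [C_mul_X_pow_eq_monomial, Lfun, lsum_apply, sum_monomial_index]
  · rfl
  · simp

lemma Lfun_Sg (γ : ℕ → ℂ) (hγ0 : γ 0 ≠ 0) (n : ℕ) :
    Lfun γ (Sg γ n) = if n = 0 then γ 0 else 0 := by
  rw [Sg, map_sum]
  simp only [Lfun_CXpow]
  cases n with
  | zero => simp [mu]
  | succ m =>
    rw [Finset.sum_range_succ]
    simp only [Nat.sub_self, Nat.choose_self, Nat.cast_one, mul_one]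
    have hmu : mu γ (m+1) = -(γ 0)⁻¹ * ∑ j ∈ (Finset.range (m+1)).attach,
        γ (m+1-j.1) * (((m+1).choose j.1 : ℕ) : ℂ) * mu γ j.1 := by rw [mu]
    rw [Finset.sum_attach (Finset.range (m+1)) (fun j => γ (m+1-j) * (((m+1).choose j : ℕ) : ℂ) * mu γ j)] at hmu
    rw [if_neg (Nat.succ_ne_zero m), hmu]
    field_simp
    rw [Finset.sum_congr rfl fun (j : ℕ) (hj : j ∈ Finset.range (m+1)) =>
      (by ring : mu γ j * γ (m + 1 - j) * ((m + 1).choose j : ℂ) =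
        γ (m + 1 - j) * ((m + 1).choose j : ℂ) * mu γ j)]
    ring

section Reverse
variable (γ : ℕ → ℂ) (a b : ℂ)

lemma Lfun_pow_Sg (hγ0 : γ 0 ≠ 0) (hγ1 : γ 1 = -b * γ 0)
    (hrec : ∀ n : ℕ, 2 ≤ n → γ n = -b * γ (n - 1) - a * ((n : ℂ) - 1) * γ (n - 2)) :
    (∀ j n : ℕ, j < n → Lfun γ (X^j * Sg γ n) = 0) ∧
    (∀ n : ℕ, Lfun γ (X^n * Sg γ n) = γ 0 * a^n * n.factorial) := by
  have hrw : ∀ j n : ℕ, Lfun γ (X^(j+1) * Sg γ n) = Lfun γ (X^j * Sg γ (n+1))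
      + b * Lfun γ (X^j * Sg γ n) + (a * n) * Lfun γ (X^j * Sg γ (n-1)) := by
    intro j n
    have h : X^(j+1) * Sg γ n = X^j * Sg γ (n+1) + C b * (X^j * Sg γ n)
        + C (a * n) * (X^j * Sg γ (n-1)) := by
      have := Sg_rec γ a b hγ1 hrec n
      calc X^(j+1) * Sg γ n = X^j * (X * Sg γ n) := by ring
        _ = _ := by rw [this]; ring
    rw [h, map_add, map_add, ← smul_eq_C_mul, ← smul_eq_C_mul, map_smul, map_smul]
    rfl
  have hA : ∀ j n : ℕ, j < n → Lfun γ (X^j * Sg γ n) = 0 := by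
    intro j
    induction j with
    | zero =>
      intro n hn
      rw [pow_zero, one_mul, Lfun_Sg γ hγ0, if_neg (by omega)]
    | succ j IH =>
      intro n hn
      rw [hrw, IH (n+1) (by omega), IH n (by omega), IH (n-1) (by omega)]
      ring
  refine ⟨hA, fun n => ?_⟩
  induction n with
  | zero =>
    simp [Lfun_Sg γ hγ0]
  | succ n IH =>
    rw [hrw, hA n (n+2) (by omega), hA n (n+1) (by omega), Nat.add_sub_cancel, IH]
    rw [Nat.factorial_succ]
    push_cast
    ring

lemma Lfun_mul_expand (q : Polynomial ℂ) (p : Polynomial ℂ) :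
    Lfun γ (p * q) = ∑ j ∈ Finset.range (p.natDegree + 1),
      p.coeff j * Lfun γ (X^j * q) := by
  conv_lhs => rw [p.as_sum_range' (p.natDegree + 1) (Nat.lt_succ_self _), Finset.sum_mul,
    map_sum]
  refine Finset.sum_congr rfl fun j hj => ?_
  rw [← C_mul_X_pow_eq_monomial, mul_assoc, ← smul_eq_C_mul, map_smul]
  rfl

end Reverse

lemma reverse_dir (γ : ℕ → ℂ) (hγ0 : γ 0 ≠ 0) (a b : ℂ) (ha : a ≠ 0)
    (hγ1 : γ 1 = -b * γ 0)
    (hrec : ∀ n : ℕ, 2 ≤ n → γ n = -b * γ (n - 1) - a * ((n : ℂ) - 1) * γ (n - 2)) :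
    (∀ m n : ℕ, m ≠ n → Lfun γ (Sg γ m * Sg γ n) = 0) ∧
    (∀ n : ℕ, Lfun γ (Sg γ n ^ 2) ≠ 0) := by
  obtain ⟨hA, hB⟩ := Lfun_pow_Sg γ a b hγ0 hγ1 hrec
  have hnd : ∀ m : ℕ, (Sg γ m).natDegree = m := fun m =>
    natDegree_eq_of_degree_eq_some (Sg_degree γ hγ0 m)
  have horth : ∀ m n : ℕ, m < n → Lfun γ (Sg γ m * Sg γ n) = 0 := by
    intro m n hmn
    rw [Lfun_mul_expand γ (Sg γ n) (Sg γ m)]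
    refine Finset.sum_eq_zero fun j hj => ?_
    rw [Finset.mem_range, hnd] at hj
    rw [hA j n (by omega), mul_zero]
  constructor
  · intro m n hmn
    rcases lt_or_gt_of_ne hmn with h | h
    · exact horth m n h
    · rw [mul_comm]; exact horth n m h
  · intro n
    rw [sq, Lfun_mul_expand γ (Sg γ n) (Sg γ n), hnd, Finset.sum_range_succ]
    rw [Finset.sum_eq_zero fun j hj => by
      rw [hA j n (Finset.mem_range.mp hj), mul_zero], zero_add, Sg_coeff_top, hB]
    refine mul_ne_zero hγ0 (mul_ne_zero (mul_ne_zero hγ0 (pow_ne_zero _ ha)) ?_)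
    exact_mod_cast Nat.factorial_ne_zero n

section Forward
variable (γ : ℕ → ℂ) (L : Polynomial ℂ →ₗ[ℂ] ℂ) (hγ0 : γ 0 ≠ 0)
  (horth : ∀ m n : ℕ, m ≠ n → L (Sg γ m * Sg γ n) = 0)
  (hsq : ∀ n : ℕ, L (Sg γ n ^ 2) ≠ 0)

include hγ0 horth in
lemma degree_reduce (m : ℕ) (p : Polynomial ℂ) (hp : p.degree < ((m+1 : ℕ) : WithBot ℕ)) :
    (p - C (p.coeff m / γ 0) * Sg γ m).degree < (m : WithBot ℕ) := by
  rw [degree_lt_iff_coeff_zero]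
  intro k hk
  have hk' : (m : WithBot ℕ) ≤ (k : WithBot ℕ) := by exact_mod_cast hk
  rw [coeff_sub, coeff_C_mul, Sg_coeff]
  rcases eq_or_lt_of_le hk with h | h
  · subst h
    rw [if_pos le_rfl, Nat.sub_self, Nat.choose_self, Nat.cast_one, mul_one,
      div_mul_cancel₀ _ hγ0, sub_self]
  · have hgt : m < k := by exact_mod_cast h
    rw [if_neg (by omega), mul_zero, sub_zero]
    exact (degree_lt_iff_coeff_zero p (m+1)).mp hp k (by exact_mod_cast hgt)

include hγ0 horth in
lemma lemF : ∀ m : ℕ, ∀ p : Polynomial ℂ, p.degree < (m : WithBot ℕ) →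
    ∀ n : ℕ, m ≤ n → L (p * Sg γ n) = 0 := by
  intro m
  induction m with
  | zero =>
    intro p hp n _
    have : p = 0 := by
      by_contra h
      exact absurd (zero_le_degree_iff.mpr h) (not_le.mpr (by exact_mod_cast hp))
    rw [this, zero_mul, map_zero]
  | succ m IH =>
    intro p hp n hn
    have hq := degree_reduce γ L hγ0 horth m p hp
    have hsplit : p * Sg γ n = (p - C (p.coeff m / γ 0) * Sg γ m) * Sg γ n
        + (p.coeff m / γ 0) • (Sg γ m * Sg γ n) := by
      rw [smul_eq_C_mul]; ring
    rw [hsplit, map_add, map_smul, IH _ hq n (by omega),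
      horth m n (by omega), smul_zero, zero_add]

include hγ0 horth hsq in
lemma lemZ : ∀ m : ℕ, ∀ p : Polynomial ℂ, p.degree < (m : WithBot ℕ) →
    (∀ j : ℕ, j < m → L (p * Sg γ j) = 0) → p = 0 := by
  intro m
  induction m with
  | zero =>
    intro p hp _
    by_contra h
    exact absurd (zero_le_degree_iff.mpr h) (not_le.mpr (by exact_mod_cast hp))
  | succ m IH =>
    intro p hp hL
    have hq := degree_reduce γ L hγ0 horth m p hp
    have hq0 : p - C (p.coeff m / γ 0) * Sg γ m = 0 := by
      refine IH _ hq fun j hj => ?_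
      have hsplit : (p - C (p.coeff m / γ 0) * Sg γ m) * Sg γ j
          = p * Sg γ j - (p.coeff m / γ 0) • (Sg γ m * Sg γ j) := by
        rw [smul_eq_C_mul]; ring
      rw [hsplit, map_sub, map_smul, hL j (by omega), horth m j (by omega),
        smul_zero, sub_zero]
    have hpeq : p = C (p.coeff m / γ 0) * Sg γ m := by
      have := sub_eq_zero.mp hq0; exact this
    have h0 : (p.coeff m / γ 0) * L (Sg γ m ^ 2) = 0 := by
      have := hL m (by omega)
      rw [hpeq, mul_assoc, ← sq, ← smul_eq_C_mul, map_smul] at this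
      exact this
    have : p.coeff m / γ 0 = 0 := by
      rcases mul_eq_zero.mp h0 with h | h
      · exact h
      · exact absurd h (hsq m)
    rw [hpeq, this, C_0, zero_mul]

end Forward

lemma coeff_X_mul' (p : Polynomial ℂ) (k : ℕ) (hk : 1 ≤ k) :
    (X * p).coeff k = p.coeff (k-1) := by
  obtain ⟨k', rfl⟩ : ∃ k', k = k' + 1 := ⟨k - 1, by omega⟩
  rw [coeff_X_mul, Nat.add_sub_cancel]

noncomputable def βc (γ : ℕ → ℂ) (L : Polynomial ℂ →ₗ[ℂ] ℂ) (n : ℕ) : ℂ :=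
  L (X * Sg γ n * Sg γ n) / L (Sg γ n ^ 2)

noncomputable def cc (γ : ℕ → ℂ) (L : Polynomial ℂ →ₗ[ℂ] ℂ) (n : ℕ) : ℂ :=
  L (X * Sg γ n * Sg γ (n-1)) / L (Sg γ (n-1) ^ 2)

section Forward2
variable (γ : ℕ → ℂ) (L : Polynomial ℂ →ₗ[ℂ] ℂ) (hγ0 : γ 0 ≠ 0)
  (horth : ∀ m n : ℕ, m ≠ n → L (Sg γ m * Sg γ n) = 0)
  (hsq : ∀ n : ℕ, L (Sg γ n ^ 2) ≠ 0)

include hγ0 horth hsq in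
lemma lemR0 : X * Sg γ 0 = Sg γ 1 + C (βc γ L 0) * Sg γ 0 := by
  have key : X * Sg γ 0 - Sg γ 1 - C (βc γ L 0) * Sg γ 0 = 0 := by
    refine lemZ γ L hγ0 horth hsq 1 _ ?_ ?_
    · rw [degree_lt_iff_coeff_zero]
      intro k hk
      have hk' : 1 ≤ k := by exact_mod_cast hk
      rw [coeff_sub, coeff_sub, coeff_X_mul' _ _ hk', coeff_C_mul, Sg_coeff, Sg_coeff, Sg_coeff]
      rcases eq_or_lt_of_le hk' with h | h
      · subst h; norm_num
      · rw [if_neg (by omega), if_neg (by omega), if_neg (by omega)]; ring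
    · intro j hj
      interval_cases j
      have expand : (X * Sg γ 0 - Sg γ 1 - C (βc γ L 0) * Sg γ 0) * Sg γ 0
          = X * Sg γ 0 * Sg γ 0 - Sg γ 1 * Sg γ 0 - (βc γ L 0) • (Sg γ 0 ^ 2) := by
        rw [smul_eq_C_mul]; ring
      rw [expand, map_sub, map_sub, map_smul, horth 1 0 (by omega), βc]
      simp only [smul_eq_mul]
      rw [div_mul_cancel₀ _ (hsq 0)]
      ring
  linear_combination key

include hγ0 horth hsq in
lemma lemRn (n : ℕ) (hn : 1 ≤ n) : X * Sg γ n
    = Sg γ (n+1) + C (βc γ L n) * Sg γ n + C (cc γ L n) * Sg γ (n-1) := by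
  have key : X * Sg γ n - Sg γ (n+1) - C (βc γ L n) * Sg γ n
      - C (cc γ L n) * Sg γ (n-1) = 0 := by
    refine lemZ γ L hγ0 horth hsq (n+1) _ ?_ ?_
    · rw [degree_lt_iff_coeff_zero]
      intro k hk
      have hk' : n + 1 ≤ k := by exact_mod_cast hk
      rw [coeff_sub, coeff_sub, coeff_sub, coeff_X_mul' _ _ (by omega), coeff_C_mul,
        coeff_C_mul, Sg_coeff, Sg_coeff, Sg_coeff, Sg_coeff]
      rcases eq_or_lt_of_le hk' with h | h
      · rw [← h, if_pos (by omega), if_pos (by omega), if_neg (by omega), if_neg (by omega)]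
        rw [show n - (n+1-1) = 0 by omega, show n+1-(n+1) = 0 by omega, show n+1-1 = n by omega,
          Nat.choose_self, Nat.choose_self]
        ring
      · rw [if_neg (by omega), if_neg (by omega), if_neg (by omega), if_neg (by omega)]; ring
    · intro j hj
      have hjn : j ≤ n := by omega
      by_cases hj1 : j = n
      · subst hj1
        have expand : (X * Sg γ j - Sg γ (j+1) - C (βc γ L j) * Sg γ j
            - C (cc γ L j) * Sg γ (j-1)) * Sg γ j
            = X * Sg γ j * Sg γ j - Sg γ (j+1) * Sg γ j - (βc γ L j) • (Sg γ j ^ 2)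
              - (cc γ L j) • (Sg γ (j-1) * Sg γ j) := by
          rw [smul_eq_C_mul, smul_eq_C_mul]; ring
        rw [expand, map_sub, map_sub, map_sub, map_smul, map_smul, horth (j+1) j (by omega),
          horth (j-1) j (by omega), βc]
        simp only [smul_eq_mul, smul_zero]
        rw [div_mul_cancel₀ _ (hsq j)]
        ring
      by_cases hj2 : j = n - 1
      · subst hj2
        have expand : (X * Sg γ n - Sg γ (n+1) - C (βc γ L n) * Sg γ n
            - C (cc γ L n) * Sg γ (n-1)) * Sg γ (n-1)
            = X * Sg γ n * Sg γ (n-1) - Sg γ (n+1) * Sg γ (n-1)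
              - (βc γ L n) • (Sg γ n * Sg γ (n-1)) - (cc γ L n) • (Sg γ (n-1) ^ 2) := by
          rw [smul_eq_C_mul, smul_eq_C_mul]; ring
        rw [expand, map_sub, map_sub, map_sub, map_smul, map_smul, horth (n+1) (n-1) (by omega),
          horth n (n-1) (by omega), cc]
        simp only [smul_eq_mul, smul_zero]
        rw [div_mul_cancel₀ _ (hsq (n-1))]
        ring
      · -- j ≤ n - 2
        have expand : (X * Sg γ n - Sg γ (n+1) - C (βc γ L n) * Sg γ n
            - C (cc γ L n) * Sg γ (n-1)) * Sg γ j
            = (X * Sg γ j) * Sg γ n - Sg γ (n+1) * Sg γ j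
              - (βc γ L n) • (Sg γ n * Sg γ j) - (cc γ L n) • (Sg γ (n-1) * Sg γ j) := by
          rw [smul_eq_C_mul, smul_eq_C_mul]; ring
        have hdX : (X * Sg γ j).degree < (n : WithBot ℕ) := by
          rw [degree_mul, degree_X, Sg_degree γ hγ0 j]
          have : ((1 + j : ℕ) : WithBot ℕ) < (n : WithBot ℕ) := by
            exact_mod_cast (by omega : 1 + j < n)
          exact_mod_cast this
        rw [expand, map_sub, map_sub, map_sub, map_smul, map_smul,
          lemF γ L hγ0 horth n _ hdX n le_rfl, horth (n+1) j (by omega),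
          horth n j (by omega), horth (n-1) j (by omega), smul_zero, smul_zero]
        ring
  linear_combination key

end Forward2

section Forward3
variable (γ : ℕ → ℂ) (L : Polynomial ℂ →ₗ[ℂ] ℂ) (hγ0 : γ 0 ≠ 0)
  (horth : ∀ m n : ℕ, m ≠ n → L (Sg γ m * Sg γ n) = 0)
  (hsq : ∀ n : ℕ, L (Sg γ n ^ 2) ≠ 0)

include hγ0 horth hsq in
lemma beta1 : βc γ L 1 = βc γ L 0 := by
  have h1 := congrArg derivative (lemRn γ L hγ0 horth hsq 1 le_rfl)
  simp only [derivative_mul, derivative_X, derivative_add, derivative_C_mul, Sg_derivative,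
    Nat.add_sub_cancel, one_mul, Nat.sub_self] at h1
  have h0 := lemR0 γ L hγ0 horth hsq
  have key : (βc γ L 0 - βc γ L 1) • Sg γ 0 = 0 := by
    simp only [smul_eq_C_mul, map_sub, derivative_C] at h1 ⊢
    push_cast at h1
    simp only [map_ofNat, C_0, C_1, zero_mul, mul_zero, one_mul, mul_one, add_zero,
      zero_add] at h1 ⊢
    linear_combination h1 - h0
  have := smul_eq_zero.mp key
  rcases this with h | h
  · exact (sub_eq_zero.mp h).symm
  · exact absurd h (Sg_ne_zero γ hγ0 0)


include hγ0 horth hsq in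
lemma beta_step (m : ℕ) : βc γ L (m+2) = βc γ L (m+1) ∧
    ((m:ℂ)+1) * cc γ L (m+2) = ((m:ℂ)+2) * cc γ L (m+1) := by
  have hm2 : ((m:ℂ) + 2) ≠ 0 := by
    have : ((m+2 : ℕ) : ℂ) ≠ 0 := Nat.cast_ne_zero.mpr (by omega)
    push_cast at this; exact this
  have h1 := congrArg derivative (lemRn γ L hγ0 horth hsq (m+2) (by omega))
  simp only [derivative_mul, derivative_X, derivative_add, derivative_C_mul, Sg_derivative,
    derivative_C, one_mul, zero_mul, add_zero, zero_add,
    show m+2-1 = m+1 from rfl, show m+2+1-1 = m+2 from rfl, show m+1-1 = m from rfl] at h1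
  have h2 := lemRn γ L hγ0 horth hsq (m+1) (by omega)
  rw [show m+1-1 = m from rfl] at h2
  have hE : (((m:ℂ)+2) * (βc γ L (m+1) - βc γ L (m+2))) • Sg γ (m+1)
      = (((m:ℂ)+1) * cc γ L (m+2) - ((m:ℂ)+2) * cc γ L (m+1)) • Sg γ m := by
    simp only [smul_eq_C_mul, map_sub, map_add, map_mul, map_one, map_ofNat] at h1 ⊢
    push_cast at h1 ⊢
    simp only [C_add, C_1, map_ofNat] at h1 ⊢
    linear_combination h1 - (C (m:ℂ) + 2) * h2
  have hβ : βc γ L (m+2) = βc γ L (m+1) := by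
    have hcoeff := congrArg (fun p => Polynomial.coeff p (m+1)) hE
    simp only [coeff_smul, Sg_coeff_top, Sg_coeff, if_neg (by omega : ¬ m+1 ≤ m),
      smul_eq_mul, mul_zero] at hcoeff
    rcases mul_eq_zero.mp hcoeff with h | h
    · rcases mul_eq_zero.mp h with h' | h'
      · exact absurd h' hm2
      · linear_combination -h'
    · exact absurd h hγ0
  refine ⟨hβ, ?_⟩
  rw [hβ] at hE
  simp only [sub_self, mul_zero, zero_smul] at hE
  rcases smul_eq_zero.mp hE.symm with h | h
  · linear_combination h
  · exact absurd h (Sg_ne_zero γ hγ0 m)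

end Forward3

section Forward4
variable (γ : ℕ → ℂ) (L : Polynomial ℂ →ₗ[ℂ] ℂ) (hγ0 : γ 0 ≠ 0)
  (horth : ∀ m n : ℕ, m ≠ n → L (Sg γ m * Sg γ n) = 0)
  (hsq : ∀ n : ℕ, L (Sg γ n ^ 2) ≠ 0)

include hγ0 horth hsq in
lemma forward_dir : ∃ a b : ℂ, a ≠ 0 ∧ γ 1 = -b * γ 0 ∧
    ∀ n : ℕ, 2 ≤ n → γ n = -b * γ (n - 1) - a * ((n : ℂ) - 1) * γ (n - 2) := by
  set b := βc γ L 0 with hbdef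
  set a := cc γ L 1 with hadef
  have hb : ∀ n, βc γ L n = b := by
    intro n
    induction n with
    | zero => rfl
    | succ k IH =>
      cases k with
      | zero => exact beta1 γ L hγ0 horth hsq
      | succ k' => rw [(beta_step γ L hγ0 horth hsq k').1]; exact IH
  have hc : ∀ m : ℕ, cc γ L (m+1) = a * ((m:ℂ)+1) := by
    intro m
    induction m with
    | zero => simp [hadef]
    | succ k IH =>
      have hk1 : ((k:ℂ)+1) ≠ 0 := by
        have : ((k+1 : ℕ) : ℂ) ≠ 0 := Nat.cast_ne_zero.mpr (by omega)
        push_cast at this; exact this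
      have hstep := (beta_step γ L hγ0 horth hsq k).2
      rw [IH] at hstep
      have : ((k:ℂ)+1) * cc γ L (k+2) = ((k:ℂ)+1) * (a * ((k:ℂ)+1+1)) := by
        linear_combination hstep
      have := mul_left_cancel₀ hk1 this
      push_cast
      rw [show k+1+1 = k+2 from rfl, this]
  have ha : a ≠ 0 := by
    have h0 := lemR0 γ L hγ0 horth hsq
    have hXSg : X * Sg γ 1 * Sg γ 0 = Sg γ 1 ^ 2 + b • (Sg γ 0 * Sg γ 1) := by
      rw [smul_eq_C_mul]
      linear_combination (Sg γ 1) * h0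
    have hval : L (X * Sg γ 1 * Sg γ 0) = L (Sg γ 1 ^ 2) := by
      rw [hXSg, map_add, map_smul, horth 0 1 (by omega), smul_zero, add_zero]
    rw [hadef, cc, show (1:ℕ) - 1 = 0 from rfl, hval]
    exact div_ne_zero (hsq 1) (hsq 0)
  have hcoeff : ∀ n : ℕ, 1 ≤ n → 0 = γ (n+1) + βc γ L n * γ n + cc γ L n * γ (n-1) := by
    intro n hn
    have h := congrArg (fun p => Polynomial.coeff p 0) (lemRn γ L hγ0 horth hsq n hn)
    simpa only [mul_coeff_zero, coeff_X_zero, zero_mul, coeff_add, coeff_C_mul,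
      coeff_C_zero, Sg_coeff_zero] using h
  have hγ1 : γ 1 = -b * γ 0 := by
    have h := congrArg (fun p => Polynomial.coeff p 0) (lemR0 γ L hγ0 horth hsq)
    simp only [mul_coeff_zero, coeff_X_zero, zero_mul, coeff_add, coeff_C_mul,
      coeff_C_zero, Sg_coeff_zero] at h
    linear_combination -h
  refine ⟨a, b, ha, hγ1, fun n hn => ?_⟩
  have h := hcoeff (n-1) (by omega)
  rw [show n-1+1 = n by omega, hb (n-1), show n-1-1 = n-2 by omega,
    show n-1 = (n-2)+1 by omega, hc (n-2)] at h
  have hcast : ((n-2 : ℕ) : ℂ) + 1 = (n:ℂ) - 1 := by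
    have : ((n-2:ℕ):ℂ) = (n:ℂ) - 2 := by push_cast [Nat.cast_sub (by omega : 2 ≤ n)]; ring
    rw [this]; ring
  rw [hcast] at h
  rw [show (n-2)+1 = n-1 by omega] at h
  linear_combination -h

end Forward4

/-- The sequence `P n = ∑_{k=0}^n (γ k / k!) D^k[x^n]` is an orthogonal
polynomial sequence iff `γ 0 ≠ 0` and there are constants `a ≠ 0`, `b` with
`γ 1 = -b γ 0` and `γ n = -b γ (n-1) - a(n-1) γ (n-2)` for all `n ≥ 2`. -/
theorem stmt_3 (γ : ℕ → ℂ) (P : ℕ → Polynomial ℂ)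
    (hP : ∀ n : ℕ, P n = ∑ k ∈ Finset.range (n + 1),
      Polynomial.C (γ k / (k.factorial : ℂ)) * Polynomial.derivative^[k] (Polynomial.X ^ n)) :
    (∃ L : Polynomial ℂ →ₗ[ℂ] ℂ,
        (∀ n : ℕ, (P n).degree = n) ∧
        (∀ m n : ℕ, m ≠ n → L (P m * P n) = 0) ∧
        (∀ n : ℕ, L (P n ^ 2) ≠ 0)) ↔
    (γ 0 ≠ 0 ∧ ∃ a b : ℂ, a ≠ 0 ∧ γ 1 = -b * γ 0 ∧
      ∀ n : ℕ, 2 ≤ n → γ n = -b * γ (n - 1) - a * ((n : ℂ) - 1) * γ (n - 2)) := by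
  have hPS : ∀ n, P n = Sg γ n := fun n => (hP n).trans (Pform γ n)
  constructor
  · rintro ⟨L, hdeg, horth, hsq⟩
    simp only [hPS] at hdeg horth hsq
    have hγ0 : γ 0 ≠ 0 := by
      intro h
      have h0 : Sg γ 0 = 0 := by simp [Sg, h]
      have := hdeg 0
      rw [h0, degree_zero] at this
      exact absurd this (by simp)
    exact ⟨hγ0, forward_dir γ L hγ0 horth hsq⟩
  · rintro ⟨hγ0, a, b, ha, hγ1, hrec⟩
    obtain ⟨horth, hsq⟩ := reverse_dir γ hγ0 a b ha hγ1 hrec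
    refine ⟨Lfun γ, fun n => ?_, fun m n hmn => ?_, fun n => ?_⟩
    · rw [hPS]; exact Sg_degree γ hγ0 n
    · rw [hPS, hPS]; exact horth m n hmn
    · rw [hPS]; exact hsq n
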